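/- Let H be a finite simple graph with a positive integer weight assigned to each edge, such that for no pair of vertices of H do there exist two distinct geodesics of length two between them. Then there exists a finite simple graph G with positive integer edge weights such that the weighted graph G is geodetic (between any two vertices of G there is exactly one geodesic), H is an induced subgraph of G whose edge weights are preserved, and every edge of G not belonging to H has weight 1 or 2. -/

import Mathlib

open SimpleGraph

/-- The *length* of a walk in a graph whose edges carry weights `w`:
the sum of the weights of its edges. -/
def wLength {V : Type*} {G : SimpleGraph V} (w : Sym2 V → ℕ) {u v : V} (p : G.Walk u v) : ℕ :=
  (p.edges.map w).sum

/-- The weighted distance between two vertices: the minimum weighted length of a path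
between them. -/
noncomputable def wDist {V : Type*} (G : SimpleGraph V) (w : Sym2 V → ℕ) (u v : V) : ℕ :=
  sInf {n : ℕ | ∃ p : G.Walk u v, p.IsPath ∧ wLength w p = n}

namespace Geo

set_option linter.unusedSectionVars false

/-! ### Generic lemmas about unique geodesics -/

section master
variable {V' : Type*} {G : SimpleGraph V'} {w : Sym2 V' → ℕ}

lemma wLength_nil {a : V'} : wLength w (Walk.nil : G.Walk a a) = 0 := rfl

lemma wLength_cons {a b c : V'} (h : G.Adj a b) (p : G.Walk b c) :
    wLength w (Walk.cons h p) = w s(a, b) + wLength w p := by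
  simp [wLength]

lemma wLength_reverse {a b : V'} (p : G.Walk a b) :
    wLength w p.reverse = wLength w p := by
  simp [wLength, Walk.edges_reverse, List.map_reverse, List.sum_reverse]

lemma len_le_wLength (hw : ∀ e ∈ G.edgeSet, 1 ≤ w e) {a b : V'} (p : G.Walk a b) :
    p.length ≤ wLength w p := by
  induction p with
  | nil => simp [wLength]
  | cons h p ih =>
    rw [wLength_cons]
    have : 1 ≤ w s(_, _) := hw _ (by simpa using h)
    have := Nat.add_le_add this ih
    simpa [Nat.add_comm] using this

section pos
variable (hw : ∀ e ∈ G.edgeSet, 1 ≤ w e)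
include hw

lemma wDist_unique_of {a b : V'} (p0 : G.Walk a b) (hp0 : p0.IsPath) (d : ℕ)
    (hd : wLength w p0 = d)
    (hcomp : ∀ q : G.Walk a b, q.IsPath → q ≠ p0 → d < wLength w q) :
    ∃! p : G.Walk a b, p.IsPath ∧ wLength w p = wDist G w a b := by
  have hmem : d ∈ {n : ℕ | ∃ p : G.Walk a b, p.IsPath ∧ wLength w p = n} := ⟨p0, hp0, hd⟩
  have hdist : wDist G w a b = d := by
    refine le_antisymm (Nat.sInf_le hmem) (le_csInf ⟨d, hmem⟩ ?_)
    rintro n ⟨q, hq, rfl⟩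
    by_cases hqe : q = p0
    · subst hqe; omega
    · exact le_of_lt (hcomp q hq hqe)
  refine ⟨p0, ⟨hp0, by rw [hdist, hd]⟩, ?_⟩
  rintro q ⟨hq, hql⟩
  by_contra hqe
  have := hcomp q hq hqe
  rw [hdist] at hql
  omega

/-- Unique geodesic: the trivial path from a vertex to itself. -/
lemma case_refl (a : V') :
    ∃! p : G.Walk a a, p.IsPath ∧ wLength w p = wDist G w a a := by
  refine wDist_unique_of hw Walk.nil (by simp) 0 rfl ?_
  intro q hq hne
  exact absurd (Walk.isPath_iff_eq_nil.mp hq) hne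

/-- Unique geodesic: a single edge of weight 1. -/
lemma case_edge1 {a b : V'} (h : G.Adj a b) (h1 : w s(a, b) = 1) :
    ∃! p : G.Walk a b, p.IsPath ∧ wLength w p = wDist G w a b := by
  refine wDist_unique_of hw (Walk.cons h Walk.nil) (by simp [h.ne]) 1
    (by simp [wLength_cons, h1, wLength_nil]) ?_
  intro q hq hne
  cases q with
  | nil => exact absurd rfl h.ne
  | cons h' q' =>
    cases q' with
    | nil => exact absurd rfl hne
    | cons h'' q'' =>
      have := len_le_wLength hw (Walk.cons h' (Walk.cons h'' q''))
      simp only [Walk.length_cons] at this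
      omega

/-- Unique geodesic: a two-edge path of weight 1+1, no competing short edge or midpoint. -/
lemma case_two {a b c : V'} (hab : a ≠ b) (h1 : G.Adj a c) (h2 : G.Adj c b)
    (w1 : w s(a, c) = 1) (w2 : w s(c, b) = 1)
    (hedge : ∀ _ : G.Adj a b, 3 ≤ w s(a, b))
    (hmid : ∀ c', G.Adj a c' → G.Adj c' b → w s(a, c') = 1 → w s(c', b) = 1 → c' = c) :
    ∃! p : G.Walk a b, p.IsPath ∧ wLength w p = wDist G w a b := by
  have hp0 : (Walk.cons h1 (Walk.cons h2 Walk.nil)).IsPath := by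
    simp [Walk.cons_isPath_iff, h2.ne, hab, h1.ne]
  refine wDist_unique_of hw _ hp0 2
    (by simp [wLength_cons, w1, w2, wLength_nil]) ?_
  intro q hq hne
  cases q with
  | nil => exact absurd rfl hab
  | cons h' q' =>
    rename_i c'
    cases q' with
    | nil =>
      have := hedge h'
      simp only [wLength_cons, wLength_nil]
      omega
    | cons h'' q'' =>
      rename_i c''
      cases q'' with
      | nil =>
        have hne' : c' ≠ c := fun hcc => by subst hcc; exact hne rfl
        have hw1 : 1 ≤ w s(a, c') := hw _ (by simpa using h')
        have hw2 : 1 ≤ w s(c', b) := hw _ (by simpa using h'')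
        have : ¬ (w s(a, c') = 1 ∧ w s(c', b) = 1) := by
          rintro ⟨e1, e2⟩
          exact hne' (hmid c' h' h'' e1 e2)
        simp only [wLength_cons, wLength_nil]
        omega
      | cons h''' q''' =>
        have := len_le_wLength hw (Walk.cons h' (Walk.cons h'' (Walk.cons h''' q''')))
        simp only [Walk.length_cons] at this
        omega

/-- Unique geodesic: a single edge of weight 2, no competing 1-1 two-path. -/
lemma case_edge2 {a b : V'} (h : G.Adj a b) (h2 : w s(a, b) = 2)
    (hmid : ∀ c, G.Adj a c → G.Adj c b → ¬(w s(a, c) = 1 ∧ w s(c, b) = 1)) :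
    ∃! p : G.Walk a b, p.IsPath ∧ wLength w p = wDist G w a b := by
  refine wDist_unique_of hw (Walk.cons h Walk.nil) (by simp [h.ne]) 2
    (by simp [wLength_cons, h2, wLength_nil]) ?_
  intro q hq hne
  cases q with
  | nil => exact absurd rfl h.ne
  | cons h' q' =>
    rename_i c'
    cases q' with
    | nil => exact absurd rfl hne
    | cons h'' q'' =>
      rename_i c''
      cases q'' with
      | nil =>
        have hw1 : 1 ≤ w s(a, c') := hw _ (by simpa using h')
        have hw2 : 1 ≤ w s(c', b) := hw _ (by simpa using h'')
        have := hmid c' h' h''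
        simp only [wLength_cons, wLength_nil]
        omega
      | cons h''' q''' =>
        have := len_le_wLength hw (Walk.cons h' (Walk.cons h'' (Walk.cons h''' q''')))
        simp only [Walk.length_cons] at this
        omega

end pos

lemma wDist_symm (a b : V') : wDist G w a b = wDist G w b a := by
  unfold wDist
  congr 1
  ext n
  constructor
  · rintro ⟨p, hp, rfl⟩
    exact ⟨p.reverse, hp.reverse, wLength_reverse p⟩
  · rintro ⟨p, hp, rfl⟩
    exact ⟨p.reverse, hp.reverse, wLength_reverse p⟩

lemma unique_rev {a b : V'}
    (h : ∃! p : G.Walk a b, p.IsPath ∧ wLength w p = wDist G w a b) :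
    ∃! p : G.Walk b a, p.IsPath ∧ wLength w p = wDist G w b a := by
  obtain ⟨p0, ⟨hp0, hl0⟩, hu⟩ := h
  refine ⟨p0.reverse, ⟨hp0.reverse, by rw [wLength_reverse, ← wDist_symm]; exact hl0⟩, ?_⟩
  rintro q ⟨hq, hql⟩
  have : q.reverse = p0 :=
    hu q.reverse ⟨hq.reverse, by rw [wLength_reverse, wDist_symm]; exact hql⟩
  rw [← this, Walk.reverse_reverse]

end master

/-! ### The construction -/

variable {W : Type} (H : SimpleGraph W) (wH : Sym2 W → ℕ)

/-- weight-1 edge -/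
def e1 (u v : W) : Prop := H.Adj u v ∧ wH s(u, v) = 1

/-- there is an `H`-path of weighted length exactly 2 -/
def cl2 (u v : W) : Prop :=
  (H.Adj u v ∧ wH s(u, v) = 2) ∨ ∃ x, e1 H wH u x ∧ e1 H wH x v

def far (u v : W) : Prop := u ≠ v ∧ ¬ e1 H wH u v ∧ ¬ cl2 H wH u v

def Far (p : Sym2 W) : Prop := ∃ u v, p = s(u, v) ∧ far H wH u v

variable {H wH}

lemma e1_symm {u v : W} (h : e1 H wH u v) : e1 H wH v u :=
  ⟨h.1.symm, by rw [Sym2.eq_swap]; exact h.2⟩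

lemma cl2_symm {u v : W} (h : cl2 H wH u v) : cl2 H wH v u := by
  rcases h with ⟨h1, h2⟩ | ⟨x, h1, h2⟩
  · exact Or.inl ⟨h1.symm, by rw [Sym2.eq_swap]; exact h2⟩
  · exact Or.inr ⟨x, e1_symm h2, e1_symm h1⟩

lemma far_symm {u v : W} (h : far H wH u v) : far H wH v u :=
  ⟨h.1.symm, fun h' => h.2.1 (e1_symm h'), fun h' => h.2.2 (cl2_symm h')⟩

lemma far_of_Far {u v : W} (h : Far H wH s(u, v)) : far H wH u v := by
  obtain ⟨u', v', he, hf⟩ := h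
  rw [Sym2.eq_iff] at he
  rcases he with ⟨rfl, rfl⟩ | ⟨rfl, rfl⟩
  · exact hf
  · exact far_symm hf

variable (H wH)

abbrev Mid := {p : Sym2 W // Far H wH p}

abbrev Vx := W ⊕ Mid H wH

open Classical in
/-- adjacency of the big graph -/
def adj : Vx H wH → Vx H wH → Prop
  | .inl u, .inl v => H.Adj u v
  | .inl x, .inr p => x ∈ p.1 ∨ ∀ a ∈ p.1, ¬ e1 H wH a x
  | .inr p, .inl x => x ∈ p.1 ∨ ∀ a ∈ p.1, ¬ e1 H wH a x
  | .inr p, .inr q => p ≠ q ∧ ∀ a ∈ p.1, a ∉ q.1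

def G : SimpleGraph (Vx H wH) where
  Adj := adj H wH
  symm := by
    constructor
    rintro (u | p) (v | q) h
    · exact h.symm
    · exact h
    · exact h
    · exact ⟨Ne.symm h.1, fun a ha hb => h.2 a hb ha⟩
  loopless := by
    constructor
    rintro (u | p) h
    · exact H.irrefl h
    · exact h.1 rfl

open Classical in
noncomputable def w2 : Vx H wH → Vx H wH → ℕ
  | .inl u, .inl v => wH s(u, v)
  | .inl x, .inr p => if x ∈ p.1 then 1 else 2
  | .inr p, .inl x => if x ∈ p.1 then 1 else 2
  | .inr _, .inr _ => 2

noncomputable def wG : Sym2 (Vx H wH) → ℕ :=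
  Sym2.lift ⟨w2 H wH, by
    rintro (u | p) (v | q) <;> simp only [w2]
    · rw [Sym2.eq_swap]⟩

variable {H wH}

@[simp] lemma wG_mk (x y : Vx H wH) : wG H wH s(x, y) = w2 H wH x y := Sym2.lift_mk _ _ _

@[simp] lemma w2_ll (u v : W) : w2 H wH (.inl u) (.inl v) = wH s(u, v) := rfl
@[simp] lemma w2_rr (p q : Mid H wH) : w2 H wH (.inr p) (.inr q) = 2 := rfl

lemma w2_lr_mem {x : W} {p : Mid H wH} (h : x ∈ p.1) : w2 H wH (.inl x) (.inr p) = 1 := by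
  simp [w2, h]

lemma w2_rl_mem {x : W} {p : Mid H wH} (h : x ∈ p.1) : w2 H wH (.inr p) (.inl x) = 1 := by
  simp [w2, h]

lemma w2_lr_not_mem {x : W} {p : Mid H wH} (h : x ∉ p.1) : w2 H wH (.inl x) (.inr p) = 2 := by
  simp [w2, h]

lemma w2_rl_not_mem {x : W} {p : Mid H wH} (h : x ∉ p.1) : w2 H wH (.inr p) (.inl x) = 2 := by
  simp [w2, h]

lemma mem_of_w2_lr {x : W} {p : Mid H wH} (h : w2 H wH (.inl x) (.inr p) = 1) : x ∈ p.1 := by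
  by_contra hm
  rw [w2_lr_not_mem hm] at h
  omega

lemma mem_of_w2_rl {x : W} {p : Mid H wH} (h : w2 H wH (.inr p) (.inl x) = 1) : x ∈ p.1 := by
  by_contra hm
  rw [w2_rl_not_mem hm] at h
  omega

lemma adj_ll {u v : W} : (G H wH).Adj (.inl u) (.inl v) ↔ H.Adj u v := Iff.rfl
lemma adj_lr {x : W} {p : Mid H wH} :
    (G H wH).Adj (.inl x) (.inr p) ↔ (x ∈ p.1 ∨ ∀ a ∈ p.1, ¬ e1 H wH a x) := Iff.rfl
lemma adj_rl {x : W} {p : Mid H wH} :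
    (G H wH).Adj (.inr p) (.inl x) ↔ (x ∈ p.1 ∨ ∀ a ∈ p.1, ¬ e1 H wH a x) := Iff.rfl
lemma adj_rr {p q : Mid H wH} :
    (G H wH).Adj (.inr p) (.inr q) ↔ (p ≠ q ∧ ∀ a ∈ p.1, a ∉ q.1) := Iff.rfl

lemma wG_pos (hpos : ∀ e ∈ H.edgeSet, 0 < wH e) :
    ∀ e ∈ (G H wH).edgeSet, 0 < wG H wH e := by
  intro e
  induction e using Sym2.ind with
  | _ x y =>
    intro he
    rw [mem_edgeSet] at he
    rcases x with u | p <;> rcases y with v | q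
    · rw [wG_mk, w2_ll]
      exact hpos _ ((mem_edgeSet H).mpr he)
    · rw [wG_mk]; simp only [w2]; split <;> omega
    · rw [wG_mk]; simp only [w2]; split <;> omega
    · rw [wG_mk, w2_rr]; omega

/-! ### Consequences of the no-two-geodesics hypothesis -/

section hno2
variable (hpos : ∀ e ∈ H.edgeSet, 0 < wH e)
include hpos

lemma wDist_H_eq_two {u v : W} (hne : u ≠ v) (hne1 : ¬ e1 H wH u v)
    {p : H.Walk u v} (hp : p.IsPath) (hl : wLength wH p = 2) :
    wDist H wH u v = 2 := by
  have hw1 : ∀ e ∈ H.edgeSet, 1 ≤ wH e := hpos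
  refine le_antisymm (Nat.sInf_le ⟨p, hp, hl⟩) (le_csInf ⟨2, p, hp, hl⟩ ?_)
  rintro n ⟨q, hq, rfl⟩
  cases q with
  | nil => exact absurd rfl hne
  | cons h' q' =>
    cases q' with
    | nil =>
      simp only [wLength_cons, wLength_nil]
      have h1 : 0 < wH s(u, v) := hpos _ ((mem_edgeSet H).mpr h')
      have h2 : wH s(u, v) ≠ 1 := fun hh => hne1 ⟨h', hh⟩
      omega
    | cons h'' q'' =>
      have := len_le_wLength hw1 (Walk.cons h' (Walk.cons h'' q''))
      simp only [Walk.length_cons] at this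
      omega

variable (hno2 : ¬ ∃ (u v : W) (p q : H.Walk u v), p ≠ q ∧ p.IsPath ∧ q.IsPath ∧
      wLength wH p = wDist H wH u v ∧ wLength wH q = wDist H wH u v ∧
      wLength wH p = 2 ∧ wLength wH q = 2)
include hno2

lemma geo2_unique {u v : W} (hne : u ≠ v) (hne1 : ¬ e1 H wH u v)
    {p q : H.Walk u v} (hp : p.IsPath) (hq : q.IsPath)
    (hlp : wLength wH p = 2) (hlq : wLength wH q = 2) : p = q := by
  by_contra hpq
  have hd := wDist_H_eq_two hpos hne hne1 hp hlp
  exact hno2 ⟨u, v, p, q, hpq, hp, hq, by rw [hd]; exact hlp, by rw [hd]; exact hlq, hlp, hlq⟩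

/-- a weight-2 edge and a 1-1 two-path cannot coexist -/
lemma no_both {u v x : W} (hne : u ≠ v) (hne1 : ¬ e1 H wH u v)
    (hadj : H.Adj u v) (h2 : wH s(u, v) = 2)
    (hx1 : e1 H wH u x) (hx2 : e1 H wH x v) : False := by
  have hxu : u ≠ x := hx1.1.ne
  have hxv : x ≠ v := hx2.1.ne
  have hpe : (Walk.cons hadj Walk.nil : H.Walk u v).IsPath := by simp [hne]
  have hpx : (Walk.cons hx1.1 (Walk.cons hx2.1 Walk.nil) : H.Walk u v).IsPath := by
    simp [Walk.cons_isPath_iff, hxv, hxu, hne]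
  have he : (Walk.cons hadj Walk.nil : H.Walk u v)
      = Walk.cons hx1.1 (Walk.cons hx2.1 Walk.nil) :=
    geo2_unique hpos hno2 hne hne1 hpe hpx
      (by simp [wLength_cons, wLength_nil, h2])
      (by simp [wLength_cons, wLength_nil, hx1.2, hx2.2])
  have := congrArg Walk.length he
  simp at this

/-- midpoints of 1-1 two-paths are unique -/
lemma mid_unique {u v x y : W} (hne : u ≠ v) (hne1 : ¬ e1 H wH u v)
    (hx1 : e1 H wH u x) (hx2 : e1 H wH x v)
    (hy1 : e1 H wH u y) (hy2 : e1 H wH y v) : x = y := by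
  have hpx : (Walk.cons hx1.1 (Walk.cons hx2.1 Walk.nil) : H.Walk u v).IsPath := by
    simp [Walk.cons_isPath_iff, hx2.1.ne, hx1.1.ne, hne]
  have hpy : (Walk.cons hy1.1 (Walk.cons hy2.1 Walk.nil) : H.Walk u v).IsPath := by
    simp [Walk.cons_isPath_iff, hy2.1.ne, hy1.1.ne, hne]
  have he := geo2_unique hpos hno2 hne hne1 hpx hpy
      (by simp [wLength_cons, wLength_nil, hx1.2, hx2.2])
      (by simp [wLength_cons, wLength_nil, hy1.2, hy2.2])
  have := congrArg Walk.support he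
  simpa using this

end hno2

end Geo


namespace Geo

section cases

variable {W : Type} {H : SimpleGraph W} {wH : Sym2 W → ℕ}
variable (hpos : ∀ e ∈ H.edgeSet, 0 < wH e)
variable (hno2 : ¬ ∃ (u v : W) (p q : H.Walk u v), p ≠ q ∧ p.IsPath ∧ q.IsPath ∧
      wLength wH p = wDist H wH u v ∧ wLength wH q = wDist H wH u v ∧
      wLength wH p = 2 ∧ wLength wH q = 2)
include hpos hno2
set_option linter.unusedSectionVars false

/-- pairs of original vertices -/
lemma main_ll (u v : W) (hne : u ≠ v) :
    ∃! p : (G H wH).Walk (.inl u) (.inl v),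
      p.IsPath ∧ wLength (wG H wH) p = wDist (G H wH) (wG H wH) (.inl u) (.inl v) := by
  have hw1 : ∀ e ∈ (G H wH).edgeSet, 1 ≤ wG H wH e := wG_pos hpos
  have hgt : H.Adj u v → 0 < wH s(u, v) := fun h => hpos _ ((mem_edgeSet H).mpr h)
  by_cases h1 : e1 H wH u v
  · exact case_edge1 hw1 (adj_ll.mpr h1.1) (by rw [wG_mk, w2_ll]; exact h1.2)
  by_cases h2 : cl2 H wH u v
  · by_cases hed : H.Adj u v ∧ wH s(u, v) = 2
    · refine case_edge2 hw1 (adj_ll.mpr hed.1) (by rw [wG_mk, w2_ll]; exact hed.2) ?_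
      rintro (b | q) ha hb ⟨hwa, hwb⟩
      · rw [wG_mk, w2_ll] at hwa hwb
        exact no_both hpos hno2 hne h1 hed.1 hed.2 ⟨adj_ll.mp ha, hwa⟩ ⟨adj_ll.mp hb, hwb⟩
      · rw [wG_mk] at hwa hwb
        have hu : u ∈ q.1 := mem_of_w2_lr hwa
        have hv : v ∈ q.1 := mem_of_w2_rl hwb
        have hq : q.1 = s(u, v) := (Sym2.mem_and_mem_iff hne).mp ⟨hu, hv⟩
        have hf : far H wH u v := far_of_Far (hq ▸ q.2)
        exact hf.2.2 h2
    · obtain ⟨x, hx1, hx2⟩ := h2.resolve_left hed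
      refine case_two hw1 (fun h => hne (Sum.inl.inj h))
        (adj_ll.mpr hx1.1) (adj_ll.mpr hx2.1)
        (by rw [wG_mk, w2_ll]; exact hx1.2) (by rw [wG_mk, w2_ll]; exact hx2.2) ?_ ?_
      · intro h
        have hadj := adj_ll.mp h
        have g0 := hgt hadj
        have g1 : wH s(u, v) ≠ 1 := fun hh => h1 ⟨hadj, hh⟩
        have g2 : wH s(u, v) ≠ 2 := fun hh => hed ⟨hadj, hh⟩
        rw [wG_mk, w2_ll]
        omega
      · rintro (b | q) ha hb hwa hwb
        · rw [wG_mk, w2_ll] at hwa hwb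
          have := mid_unique hpos hno2 hne h1 ⟨adj_ll.mp ha, hwa⟩ ⟨adj_ll.mp hb, hwb⟩ hx1 hx2
          exact congrArg Sum.inl this
        · rw [wG_mk] at hwa hwb
          have hu : u ∈ q.1 := mem_of_w2_lr hwa
          have hv : v ∈ q.1 := mem_of_w2_rl hwb
          have hq : q.1 = s(u, v) := (Sym2.mem_and_mem_iff hne).mp ⟨hu, hv⟩
          have hf : far H wH u v := far_of_Far (hq ▸ q.2)
          exact absurd (Or.inr ⟨x, hx1, hx2⟩) hf.2.2
  · -- far pair: use the midpoint
    have hfar : far H wH u v := ⟨hne, h1, h2⟩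
    set P : Mid H wH := ⟨s(u, v), u, v, rfl, hfar⟩ with hPdef
    have hmemu : u ∈ P.1 := Sym2.mem_mk_left u v
    have hmemv : v ∈ P.1 := Sym2.mem_mk_right u v
    refine case_two hw1 (fun h => hne (Sum.inl.inj h))
      (adj_lr.mpr (Or.inl hmemu)) (adj_rl.mpr (Or.inl hmemv))
      (by rw [wG_mk]; exact w2_lr_mem hmemu) (by rw [wG_mk]; exact w2_rl_mem hmemv) ?_ ?_
    · intro h
      have hadj := adj_ll.mp h
      have g0 := hgt hadj
      have g1 : wH s(u, v) ≠ 1 := fun hh => h1 ⟨hadj, hh⟩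
      have g2 : wH s(u, v) ≠ 2 := fun hh => h2 (Or.inl ⟨hadj, hh⟩)
      rw [wG_mk, w2_ll]
      omega
    · rintro (b | q) ha hb hwa hwb
      · rw [wG_mk, w2_ll] at hwa hwb
        exact absurd (Or.inr ⟨b, ⟨adj_ll.mp ha, hwa⟩, ⟨adj_ll.mp hb, hwb⟩⟩) h2
      · rw [wG_mk] at hwa hwb
        have hu : u ∈ q.1 := mem_of_w2_lr hwa
        have hv : v ∈ q.1 := mem_of_w2_rl hwb
        have hq : q.1 = s(u, v) := (Sym2.mem_and_mem_iff hne).mp ⟨hu, hv⟩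
        exact congrArg Sum.inr (Subtype.ext hq)

/-- an original vertex and a midpoint -/
lemma main_lr (x : W) (P : Mid H wH) :
    ∃! p : (G H wH).Walk (.inl x) (.inr P),
      p.IsPath ∧ wLength (wG H wH) p = wDist (G H wH) (wG H wH) (.inl x) (.inr P) := by
  have hw1 : ∀ e ∈ (G H wH).edgeSet, 1 ≤ wG H wH e := wG_pos hpos
  by_cases hx : x ∈ P.1
  · exact case_edge1 hw1 (adj_lr.mpr (Or.inl hx)) (by rw [wG_mk]; exact w2_lr_mem hx)
  · have key : ∀ u v : W, P.1 = s(u, v) → far H wH u v → e1 H wH u x →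
        ∃! p : (G H wH).Walk (.inl x) (.inr P),
          p.IsPath ∧ wLength (wG H wH) p = wDist (G H wH) (wG H wH) (.inl x) (.inr P) := by
      intro u v hP hf he
      have hmemu : u ∈ P.1 := by rw [hP]; exact Sym2.mem_mk_left u v
      refine case_two hw1 (by simp)
        (adj_ll.mpr he.1.symm) (adj_lr.mpr (Or.inl hmemu))
        (by rw [wG_mk, w2_ll]; exact (e1_symm he).2) (by rw [wG_mk]; exact w2_lr_mem hmemu)
        ?_ ?_
      · intro h
        rcases adj_lr.mp h with h' | h'
        · exact absurd h' hx
        · exact absurd he (h' u hmemu)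
      · rintro (b | q) ha hb hwa hwb
        · rw [wG_mk, w2_ll] at hwa
          rw [wG_mk] at hwb
          have hbP : b ∈ P.1 := mem_of_w2_lr hwb
          rw [hP, Sym2.mem_iff] at hbP
          rcases hbP with rfl | rfl
          · rfl
          · exact absurd (Or.inr ⟨x, he, ⟨adj_ll.mp ha, hwa⟩⟩) hf.2.2
        · rw [wG_mk, w2_rr] at hwb
          omega
    obtain ⟨u, v, hP, hf⟩ := P.2
    by_cases he1 : e1 H wH u x
    · exact key u v hP hf he1
    by_cases he2 : e1 H wH v x
    · exact key v u (hP.trans Sym2.eq_swap) (far_symm hf) he2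
    · -- no weight-1 edge from x to {u, v}: direct edge of weight 2
      refine case_edge2 hw1 (adj_lr.mpr (Or.inr ?_)) (by rw [wG_mk]; exact w2_lr_not_mem hx) ?_
      · intro a ha
        rw [hP, Sym2.mem_iff] at ha
        rcases ha with rfl | rfl
        · exact he1
        · exact he2
      · rintro (b | q) ha hb ⟨hwa, hwb⟩
        · rw [wG_mk, w2_ll] at hwa
          rw [wG_mk] at hwb
          have hbP : b ∈ P.1 := mem_of_w2_lr hwb
          rw [hP, Sym2.mem_iff] at hbP
          rcases hbP with rfl | rfl
          · exact he1 (e1_symm ⟨adj_ll.mp ha, hwa⟩)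
          · exact he2 (e1_symm ⟨adj_ll.mp ha, hwa⟩)
        · rw [wG_mk, w2_rr] at hwb
          omega

/-- two midpoints -/
lemma main_rr (P Q : Mid H wH) (hne : P ≠ Q) :
    ∃! p : (G H wH).Walk (.inr P) (.inr Q),
      p.IsPath ∧ wLength (wG H wH) p = wDist (G H wH) (wG H wH) (.inr P) (.inr Q) := by
  have hw1 : ∀ e ∈ (G H wH).edgeSet, 1 ≤ wG H wH e := wG_pos hpos
  by_cases hsh : ∃ a, a ∈ P.1 ∧ a ∈ Q.1
  · obtain ⟨a, haP, haQ⟩ := hsh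
    refine case_two hw1 (fun h => hne (Sum.inr.inj h))
      (adj_rl.mpr (Or.inl haP)) (adj_lr.mpr (Or.inl haQ))
      (by rw [wG_mk]; exact w2_rl_mem haP) (by rw [wG_mk]; exact w2_lr_mem haQ) ?_ ?_
    · intro h
      exact absurd haQ ((adj_rr.mp h).2 a haP)
    · rintro (b | r) ha hb hwa hwb
      · rw [wG_mk] at hwa hwb
        have hbP : b ∈ P.1 := mem_of_w2_rl hwa
        have hbQ : b ∈ Q.1 := mem_of_w2_lr hwb
        by_cases hba : b = a
        · exact congrArg Sum.inl hba
        · exfalso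
          have hP : P.1 = s(b, a) := (Sym2.mem_and_mem_iff hba).mp ⟨hbP, haP⟩
          have hQ : Q.1 = s(b, a) := (Sym2.mem_and_mem_iff hba).mp ⟨hbQ, haQ⟩
          exact hne (Subtype.ext (hP.trans hQ.symm))
      · rw [wG_mk, w2_rr] at hwa
        omega
  · refine case_edge2 hw1 (adj_rr.mpr ⟨hne, fun a ha hb => hsh ⟨a, ha, hb⟩⟩)
      (by rw [wG_mk, w2_rr]) ?_
    rintro (b | r) ha hb ⟨hwa, hwb⟩
    · rw [wG_mk] at hwa hwb
      exact hsh ⟨b, mem_of_w2_rl hwa, mem_of_w2_lr hwb⟩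
    · rw [wG_mk, w2_rr] at hwa
      omega

end cases

end Geo

/-- Let `H` be a finite graph with positive integer edge weights such that no pair of
vertices of `H` has two distinct weighted geodesics of length two between them.  Then there
is a finite weighted geodetic graph `G` containing `H` as an induced subgraph with the same
edge weights, all added edges having weight `1` or `2`. -/
theorem stmt_19 {W : Type} [Fintype W] (H : SimpleGraph W) (wH : Sym2 W → ℕ)
    (hpos : ∀ e ∈ H.edgeSet, 0 < wH e)
    (hno2 : ¬ ∃ (u v : W) (p q : H.Walk u v), p ≠ q ∧ p.IsPath ∧ q.IsPath ∧
      wLength wH p = wDist H wH u v ∧ wLength wH q = wDist H wH u v ∧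
      wLength wH p = 2 ∧ wLength wH q = 2) :
    ∃ (V : Type) (_ : Fintype V) (G : SimpleGraph V) (wG : Sym2 V → ℕ) (f : H ↪g G),
      (∀ e ∈ G.edgeSet, 0 < wG e) ∧
      (∀ u v : V, ∃! p : G.Walk u v, p.IsPath ∧ wLength wG p = wDist G wG u v) ∧
      (∀ a b : W, H.Adj a b → wG s(f a, f b) = wH s(a, b)) ∧
      (∀ e ∈ G.edgeSet, (¬ ∃ a b : W, H.Adj a b ∧ e = s(f a, f b)) →
        wG e = 1 ∨ wG e = 2) := by
  classical
  have hw1 : ∀ e ∈ (Geo.G H wH).edgeSet, 1 ≤ Geo.wG H wH e := Geo.wG_pos hpos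
  refine ⟨Geo.Vx H wH, inferInstance, Geo.G H wH, Geo.wG H wH,
    ⟨⟨Sum.inl, Sum.inl_injective⟩, Iff.rfl⟩, Geo.wG_pos hpos, ?_, ?_, ?_⟩
  · -- geodetic
    intro x y
    by_cases hxy : x = y
    · subst hxy
      exact Geo.case_refl hw1 x
    · rcases x with u | P <;> rcases y with v | Q
      · exact Geo.main_ll hpos hno2 u v (fun h => hxy (congrArg Sum.inl h))
      · exact Geo.main_lr hpos hno2 u Q
      · exact Geo.unique_rev (Geo.main_lr hpos hno2 v P)
      · exact Geo.main_rr hpos hno2 P Q (fun h => hxy (congrArg Sum.inr h))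
  · -- weights preserved
    intro a b _
    rw [Geo.wG_mk]
    rfl
  · -- new edges have weight 1 or 2
    intro e
    induction e using Sym2.ind with
    | _ x y =>
      intro he hn
      rw [SimpleGraph.mem_edgeSet] at he
      rcases x with u | P <;> rcases y with v | Q
      · exact absurd ⟨u, v, he, rfl⟩ hn
      · rw [Geo.wG_mk]
        simp only [Geo.w2]
        split <;> simp
      · rw [Geo.wG_mk]
        simp only [Geo.w2]
        split <;> simp
      · rw [Geo.wG_mk, Geo.w2_rr]
        simp
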